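/- In the deferred-acceptance algorithm, once a doctor receives a proposal, the doctor remains matched for the rest of the algorithm, and the sequence of patients tentatively held by that doctor is weakly improving in the doctor's preference order. -/

import Mathlib

/-- State of the patient-proposing deferred-acceptance (Gale–Shapley) algorithm:
`tent d` is the patient tentatively held by doctor `d` (if any), and
`next p` is the index (in patient `p`'s preference list) of the next doctor
that `p` will propose to. -/
structure GSState (n : ℕ) where
  tent : Fin n → Option (Fin n)
  next : Fin n → ℕ

/-- The set of currently free (unmatched) patients. -/
def freeSet {n : ℕ} (s : GSState n) : Finset (Fin n) :=
  Finset.univ.filter (fun p => ∀ d, s.tent d ≠ some p)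

/-- One step of the algorithm: a free patient proposes to the most preferred
doctor not yet proposed to; the doctor holds the better of the proposer and
the currently held patient (lower `drank` value = more preferred). -/
def gsStep {n : ℕ} (plist : Fin n → ℕ → Fin n) (drank : Fin n → Fin n → ℕ)
    (s : GSState n) : GSState n :=
  if h : (freeSet s).Nonempty then
    let p := (freeSet s).min' h
    let d := plist p (s.next p)
    let next' := Function.update s.next p (s.next p + 1)
    match s.tent d with
    | none => ⟨Function.update s.tent d (some p), next'⟩
    | some q =>
        if drank d p < drank d q then ⟨Function.update s.tent d (some p), next'⟩
        else ⟨s.tent, next'⟩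
  else s

/-- Running the algorithm for a given number of steps from the empty state. -/
def gsRun {n : ℕ} (plist : Fin n → ℕ → Fin n) (drank : Fin n → Fin n → ℕ) :
    ℕ → GSState n
  | 0 => ⟨fun _ => none, fun _ => 0⟩
  | k + 1 => gsStep plist drank (gsRun plist drank k)

/-- The final state of the deferred-acceptance algorithm (it stabilizes after
at most `n * n` proposals). -/
def gsFinal (n : ℕ) (plist : Fin n → ℕ → Fin n) (drank : Fin n → Fin n → ℕ) :
    GSState n :=
  gsRun plist drank (n * n + 1)


lemma gsStep_tent_mono {n : ℕ} (plist : Fin n → ℕ → Fin n) (drank : Fin n → Fin n → ℕ)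
    (s : GSState n) (d p : Fin n) (h : s.tent d = some p) :
    ∃ p', (gsStep plist drank s).tent d = some p' ∧ drank d p' ≤ drank d p := by
  unfold gsStep
  split
  · next hne =>
    set p0 := (freeSet s).min' hne with hp0
    set d0 := plist p0 (s.next p0) with hd0
    cases hc : s.tent d0 with
    | none =>
      simp only [← hd0, hc]
      by_cases hd : d = d0
      · subst hd; rw [h] at hc; exact absurd hc (by simp)
      · exact ⟨p, by simp [Function.update_of_ne hd, h], le_rfl⟩
    | some q =>
      simp only [← hd0, hc]
      split_ifs with hlt
      · by_cases hd : d = d0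
        · subst hd; rw [h] at hc
          refine ⟨p0, by simp, ?_⟩
          cases hc; exact le_of_lt hlt
        · exact ⟨p, by simp [Function.update_of_ne hd, h], le_rfl⟩
      · exact ⟨p, h, le_rfl⟩
  · exact ⟨p, h, le_rfl⟩

lemma gsRun_tent_mono {n : ℕ} (plist : Fin n → ℕ → Fin n) (drank : Fin n → Fin n → ℕ)
    (k k' : ℕ) (hk : k ≤ k') (d p : Fin n)
    (h : (gsRun plist drank k).tent d = some p) :
    ∃ p', (gsRun plist drank k').tent d = some p' ∧ drank d p' ≤ drank d p := by
  induction k' , hk using Nat.le_induction with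
  | base => exact ⟨p, h, le_rfl⟩
  | succ m hm ih =>
    obtain ⟨q, hq, hle⟩ := ih
    obtain ⟨q', hq', hle'⟩ := gsStep_tent_mono plist drank _ d q hq
    exact ⟨q', hq', le_trans hle' hle⟩

/-- once a doctor receives a proposal he stays matched for the
rest of the algorithm, and the sequence of patients tentatively held by the
doctor is weakly improving in the doctor's preference order (lower `drank`
value = more preferred). -/
theorem gs_doctor_monotone (n : ℕ)
    (plist : Fin n → ℕ → Fin n) (prank drank : Fin n → Fin n → ℕ)
    (hplist : ∀ p, Function.Bijective (fun k : Fin n => plist p (k : ℕ)))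
    (hprank : ∀ p (k : Fin n), prank p (plist p (k : ℕ)) = (k : ℕ))
    (hdinj : ∀ d, Function.Injective (drank d)) :
    (∀ (k k' : ℕ) (d p : Fin n), k ≤ k' →
        (gsRun plist drank k).tent d = some p →
        ∃ p', (gsRun plist drank k').tent d = some p') ∧
    (∀ (k k' : ℕ) (d p p' : Fin n), k ≤ k' →
        (gsRun plist drank k).tent d = some p →
        (gsRun plist drank k').tent d = some p' →
        drank d p' ≤ drank d p) := by
  constructor
  · intro k k' d p hk h
    obtain ⟨p', hp', _⟩ := gsRun_tent_mono plist drank k k' hk d p h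
    exact ⟨p', hp'⟩
  · intro k k' d p p' hk h h'
    obtain ⟨q, hq, hle⟩ := gsRun_tent_mono plist drank k k' hk d p h
    rw [h'] at hq
    cases hq
    exact hle
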